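/- arXiv:1803.02672 — 2 statements merged into one kernel-verified Lean document; each statement's English description precedes it below -/
import Mathlib

section
/- Let d ∈ ℕ*, α ∈ (0,1), k ∈ (0,α), and m(x) := ⟨x⟩^k. Then there exists a constant C > 0 (depending only on d, α, k) such that for all x ∈ ℝ^d, ∫_{ℝ^d} |m(y)^{−1} − m(x)^{−1}| / |y−x|^{d+α} dy ≤ C ⟨x⟩^{−α}. -/
open MeasureTheory Metric Set ENNReal

/-- Japanese bracket `⟨x⟩ = (1+|x|²)^{1/2}`. -/
noncomputable def jb {d : ℕ} (x : EuclideanSpace ℝ (Fin d)) : ℝ := Real.sqrt (1 + ‖x‖ ^ 2)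

section Aux

lemma one_le_jb {d : ℕ} (x : EuclideanSpace ℝ (Fin d)) : 1 ≤ jb x := by
  rw [jb]
  nlinarith [Real.sq_sqrt (show (0:ℝ) ≤ 1 + ‖x‖ ^ 2 by positivity),
    Real.sqrt_nonneg (1 + ‖x‖ ^ 2), sq_nonneg ‖x‖]

lemma jb_pos {d : ℕ} (x : EuclideanSpace ℝ (Fin d)) : 0 < jb x :=
  lt_of_lt_of_le one_pos (one_le_jb x)

lemma sqrt_aux {a t : ℝ} (ha : 0 ≤ a) (ht : 0 ≤ t) :
    Real.sqrt (1 + (a + t) ^ 2) ≤ Real.sqrt (1 + a ^ 2) + t := by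
  have h2 : a ≤ Real.sqrt (1 + a ^ 2) := by
    calc a ≤ |a| := le_abs_self a
    _ = Real.sqrt (a ^ 2) := (Real.sqrt_sq_eq_abs a).symm
    _ ≤ _ := Real.sqrt_le_sqrt (by linarith)
  have h1 : Real.sqrt (1 + a ^ 2) ^ 2 = 1 + a ^ 2 :=
    Real.sq_sqrt (by positivity)
  calc Real.sqrt (1 + (a + t) ^ 2) ≤ Real.sqrt ((Real.sqrt (1 + a ^ 2) + t) ^ 2) := by
        apply Real.sqrt_le_sqrt; nlinarith
  _ = Real.sqrt (1 + a ^ 2) + t := Real.sqrt_sq (by positivity)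

lemma jb_lip {d : ℕ} (x y : EuclideanSpace ℝ (Fin d)) : jb y ≤ jb x + ‖y - x‖ := by
  have h1 : ‖y‖ ≤ ‖x‖ + ‖y - x‖ := by
    have := norm_sub_norm_le y x; linarith
  calc jb y ≤ Real.sqrt (1 + (‖x‖ + ‖y - x‖) ^ 2) := by
        apply Real.sqrt_le_sqrt
        have : ‖y‖ ^ 2 ≤ (‖x‖ + ‖y - x‖) ^ 2 := by
          apply pow_le_pow_left₀ (norm_nonneg _) h1 2
        linarith
  _ ≤ jb x + ‖y - x‖ := sqrt_aux (norm_nonneg _) (norm_nonneg _)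

lemma abs_jb_sub_le {d : ℕ} (x y : EuclideanSpace ℝ (Fin d)) : |jb y - jb x| ≤ ‖y - x‖ := by
  rw [abs_le]
  have h1 := jb_lip x y
  have h2 := jb_lip y x
  rw [norm_sub_rev] at h2
  constructor <;> linarith

lemma diff_bound {k c u v : ℝ} (hk : 0 < k) (hc : 0 < c) (hu : c ≤ u) (hv : c ≤ v) :
    |u ^ (-k) - v ^ (-k)| ≤ k * c ^ (-k - 1) * |u - v| := by
  have key := Convex.norm_image_sub_le_of_norm_hasDerivWithin_le
    (f := fun t : ℝ => t ^ (-k)) (f' := fun t : ℝ => -k * t ^ (-k - 1))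
    (C := k * c ^ (-k - 1)) (s := Set.Ici c)
    (fun t ht => (Real.hasDerivAt_rpow_const
      (Or.inl (ne_of_gt (lt_of_lt_of_le hc ht)))).hasDerivWithinAt)
    (fun t ht => by
      have htpos : (0:ℝ) < t := lt_of_lt_of_le hc ht
      have h1 : t ^ (-k - 1) ≤ c ^ (-k - 1) :=
        Real.rpow_le_rpow_of_nonpos hc ht (by linarith)
      have h2 : (0:ℝ) < t ^ (-k - 1) := Real.rpow_pos_of_pos htpos _
      rw [Real.norm_eq_abs, abs_mul, abs_neg, abs_of_pos hk, abs_of_pos h2]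
      exact mul_le_mul_of_nonneg_left h1 hk.le)
    (convex_Ici c) hv hu
  simpa [Real.norm_eq_abs] using key

variable {d : ℕ}


lemma meas_rpow_ofReal (c a : ℝ) :
    Measurable fun z : EuclideanSpace ℝ (Fin d) => ENNReal.ofReal (c * ‖z‖ ^ a) := by
  fun_prop

lemma scale {r : ℝ} (hr : 0 < r) {g : EuclideanSpace ℝ (Fin d) → ℝ≥0∞}
    (hg : Measurable g) :
    ∫⁻ z, g z = ENNReal.ofReal (r ^ d) * ∫⁻ w, g (r • w) := by
  have h1 : Measure.map (r • ·) (volume : Measure (EuclideanSpace ℝ (Fin d)))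
      = ENNReal.ofReal |((r ^ d : ℝ))⁻¹| • volume := by
    have h := Measure.map_addHaar_smul (volume : Measure (EuclideanSpace ℝ (Fin d))) (ne_of_gt hr)
    rwa [finrank_euclideanSpace_fin] at h
  have h2 : ∫⁻ w, g (r • w) = ENNReal.ofReal |((r ^ d : ℝ))⁻¹| * ∫⁻ z, g z := by
    rw [← lintegral_map hg (measurable_const_smul r), h1, lintegral_smul_measure, smul_eq_mul]
  rw [h2, ← mul_assoc, ← ENNReal.ofReal_mul (by positivity), abs_of_nonneg (by positivity),
    mul_inv_cancel₀ (by positivity), ENNReal.ofReal_one, one_mul]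

lemma set_int {a r : ℝ} (hr : 0 < r) {s t : Set (EuclideanSpace ℝ (Fin d))}
    (hs : MeasurableSet s) (ht : MeasurableSet t)
    (hst : ∀ w : EuclideanSpace ℝ (Fin d), r • w ∈ s ↔ w ∈ t) :
    ∫⁻ z in s, ENNReal.ofReal (‖z‖ ^ a) =
      ENNReal.ofReal (r ^ ((d : ℝ) + a)) *
        ∫⁻ w in t, ENNReal.ofReal (‖w‖ ^ a) := by
  have hmeas : Measurable fun z : EuclideanSpace ℝ (Fin d) => ENNReal.ofReal (‖z‖ ^ a) := by
    fun_prop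
  rw [← lintegral_indicator (f := fun z => ENNReal.ofReal (‖z‖ ^ a)) hs, scale hr (hmeas.indicator hs)]
  have key : ∀ w : EuclideanSpace ℝ (Fin d),
      s.indicator (fun z => ENNReal.ofReal (‖z‖ ^ a)) (r • w) =
        ENNReal.ofReal (r ^ a) * t.indicator (fun w => ENNReal.ofReal (‖w‖ ^ a)) w := by
    intro w
    have hnorm : ‖r • w‖ ^ a = r ^ a * ‖w‖ ^ a := by
      rw [norm_smul, Real.norm_eq_abs, abs_of_pos hr, Real.mul_rpow hr.le (norm_nonneg w)]
    by_cases hw : w ∈ t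
    · rw [Set.indicator_of_mem ((hst w).mpr hw), Set.indicator_of_mem hw, hnorm,
        ENNReal.ofReal_mul (Real.rpow_nonneg hr.le a)]
    · rw [Set.indicator_of_notMem (fun h => hw ((hst w).mp h)), Set.indicator_of_notMem hw,
        mul_zero]
  simp_rw [key]
  rw [lintegral_const_mul' _ _ ENNReal.ofReal_ne_top, lintegral_indicator (f := fun w => ENNReal.ofReal (‖w‖ ^ a)) ht,
    ← mul_assoc, ← ENNReal.ofReal_mul (by positivity), ← Real.rpow_natCast r d,
    ← Real.rpow_add hr]

lemma J1_lt_top (hd : 0 < d) {a : ℝ} (ha : -(d:ℝ) < a) (ha0 : a < 0) :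
    ∫⁻ w in ball (0 : EuclideanSpace ℝ (Fin d)) 1, ENNReal.ofReal (‖w‖ ^ a) < ⊤ := by
  set f : EuclideanSpace ℝ (Fin d) → ℝ :=
    fun w => (ball (0 : EuclideanSpace ℝ (Fin d)) 1).indicator (fun w => ‖w‖ ^ a) w with hf
  have hf_meas : Measurable f := by
    apply Measurable.indicator _ measurableSet_ball
    fun_prop
  have hf_nn : 0 ≤ᵐ[volume] f := by
    filter_upwards with w
    apply Set.indicator_nonneg
    intro z _; positivity
  have heq : ∫⁻ w in ball (0 : EuclideanSpace ℝ (Fin d)) 1, ENNReal.ofReal (‖w‖ ^ a)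
      = ∫⁻ w, ENNReal.ofReal (f w) := by
    rw [← lintegral_indicator (f := fun w => ENNReal.ofReal (‖w‖ ^ a)) measurableSet_ball]
    congr 1
    ext w
    by_cases hw : w ∈ ball (0 : EuclideanSpace ℝ (Fin d)) 1 <;> simp [hf, hw]
  rw [heq, lintegral_eq_lintegral_meas_le volume hf_nn hf_meas.aemeasurable]
  -- bound the measure of superlevel sets
  have hsub : ∀ t : ℝ, 0 < t → {w : EuclideanSpace ℝ (Fin d) | t ≤ f w} ⊆
      closedBall 0 (min 1 (t ^ a⁻¹)) := by
    intro t ht w hw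
    simp only [mem_setOf_eq] at hw
    by_cases hball : w ∈ ball (0 : EuclideanSpace ℝ (Fin d)) 1
    · have hfw : f w = ‖w‖ ^ a := by simp [hf, hball]
      rw [hfw] at hw
      have hw0 : 0 < ‖w‖ := by
        rcases eq_or_lt_of_le (norm_nonneg w) with h | h
        · exfalso; rw [← h, Real.zero_rpow (ne_of_lt ha0)] at hw; linarith
        · exact h
      have h1 : (‖w‖ ^ a) ^ a⁻¹ ≤ t ^ a⁻¹ :=
        Real.rpow_le_rpow_of_nonpos ht hw (inv_nonpos.mpr ha0.le)
      rw [Real.rpow_rpow_inv (norm_nonneg w) (ne_of_lt ha0)] at h1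
      rw [mem_closedBall_zero_iff, le_min_iff]
      exact ⟨(mem_ball_zero_iff.mp hball).le, h1⟩
    · exfalso
      have : f w = 0 := by simp [hf, hball]
      rw [this] at hw; linarith
  have hmB : (volume (ball (0 : EuclideanSpace ℝ (Fin d)) 1)) < ⊤ := measure_ball_lt_top
  calc ∫⁻ t in Ioi (0:ℝ), volume {w : EuclideanSpace ℝ (Fin d) | t ≤ f w}
      ≤ ∫⁻ t in Ioi (0:ℝ), ENNReal.ofReal (min 1 (t ^ a⁻¹) ^ d) *
          volume (ball (0 : EuclideanSpace ℝ (Fin d)) 1) := by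
        apply setLIntegral_mono' measurableSet_Ioi
        intro t ht
        calc volume {w : EuclideanSpace ℝ (Fin d) | t ≤ f w}
            ≤ volume (closedBall (0 : EuclideanSpace ℝ (Fin d)) (min 1 (t ^ a⁻¹))) :=
              measure_mono (hsub t ht)
        _ = ENNReal.ofReal (min 1 (t ^ a⁻¹) ^ d) *
              volume (ball (0 : EuclideanSpace ℝ (Fin d)) 1) := by
            rw [Measure.addHaar_closedBall _ _ (le_min (by norm_num)
              (Real.rpow_nonneg (le_of_lt ht) _)), finrank_euclideanSpace_fin]
  _ = (∫⁻ t in Ioi (0:ℝ), ENNReal.ofReal (min 1 (t ^ a⁻¹) ^ d)) *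
        volume (ball (0 : EuclideanSpace ℝ (Fin d)) 1) := by
      rw [lintegral_mul_const' _ _ hmB.ne]
  _ < ⊤ := by
      apply ENNReal.mul_lt_top _ hmB
      calc ∫⁻ t in Ioi (0:ℝ), ENNReal.ofReal (min 1 (t ^ a⁻¹) ^ d)
          ≤ ∫⁻ t in Ioc (0:ℝ) 1 ∪ Ioi 1, ENNReal.ofReal (min 1 (t ^ a⁻¹) ^ d) :=
            lintegral_mono_set Ioi_subset_Ioc_union_Ioi
      _ ≤ (∫⁻ t in Ioc (0:ℝ) 1, ENNReal.ofReal (min 1 (t ^ a⁻¹) ^ d)) +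
            ∫⁻ t in Ioi (1:ℝ), ENNReal.ofReal (min 1 (t ^ a⁻¹) ^ d) :=
            lintegral_union_le _ _ _
      _ < ⊤ := by
          apply ENNReal.add_lt_top.2
          constructor
          · calc ∫⁻ t in Ioc (0:ℝ) 1, ENNReal.ofReal (min 1 (t ^ a⁻¹) ^ d)
                ≤ ∫⁻ _ in Ioc (0:ℝ) 1, 1 := by
                  apply setLIntegral_mono' measurableSet_Ioc
                  intro t ht
                  rw [← ENNReal.ofReal_one]
                  apply ENNReal.ofReal_le_ofReal
                  apply pow_le_one₀ (le_min (by norm_num)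
                    (Real.rpow_nonneg ht.1.le _)) (min_le_left _ _)
            _ < ⊤ := by
                  rw [setLIntegral_const]
                  simp [Real.volume_Ioc]
          · have he : a⁻¹ * d < -1 := by
              rw [inv_mul_eq_div, div_lt_iff_of_neg ha0]
              linarith
            have hInt : IntegrableOn (fun t : ℝ => t ^ (a⁻¹ * d)) (Ioi (1:ℝ)) volume :=
              integrableOn_Ioi_rpow_of_lt he one_pos
            calc ∫⁻ t in Ioi (1:ℝ), ENNReal.ofReal (min 1 (t ^ a⁻¹) ^ d)
                ≤ ∫⁻ t in Ioi (1:ℝ), ENNReal.ofReal (t ^ (a⁻¹ * d)) := by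
                  apply setLIntegral_mono' measurableSet_Ioi
                  intro t ht
                  apply ENNReal.ofReal_le_ofReal
                  have h0t : (0:ℝ) < t := lt_trans one_pos ht
                  rw [Real.rpow_mul h0t.le, Real.rpow_natCast]
                  apply pow_le_pow_left₀ (le_min (by norm_num)
                    (Real.rpow_nonneg h0t.le _)) (min_le_right _ _)
            _ < ⊤ := hInt.setLIntegral_lt_top

lemma J2_lt_top {b : ℝ} (hb : (d : ℝ) < b) :
    ∫⁻ w in (ball (0 : EuclideanSpace ℝ (Fin d)) 1)ᶜ, ENNReal.ofReal (‖w‖ ^ (-b)) < ⊤ := by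
  have hb0 : 0 < b := lt_of_le_of_lt (Nat.cast_nonneg d) hb
  have hpt : ∀ w : EuclideanSpace ℝ (Fin d), w ∈ (ball (0 : EuclideanSpace ℝ (Fin d)) 1)ᶜ →
      ENNReal.ofReal (‖w‖ ^ (-b)) ≤ ENNReal.ofReal ((2:ℝ) ^ b * (1 + ‖w‖) ^ (-b)) := by
    intro w hw
    have h1 : (1:ℝ) ≤ ‖w‖ := by
      simpa [mem_ball_zero_iff] using hw
    have h0 : (0:ℝ) < ‖w‖ := lt_of_lt_of_le one_pos h1
    apply ENNReal.ofReal_le_ofReal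
    rw [Real.rpow_neg h0.le, Real.rpow_neg (by positivity)]
    have key : ((1 + ‖w‖) / 2) ^ b ≤ ‖w‖ ^ b :=
      Real.rpow_le_rpow (by positivity) (by linarith) hb0.le
    rw [Real.div_rpow (by positivity) (by norm_num)] at key
    calc (‖w‖ ^ b)⁻¹ ≤ ((1 + ‖w‖) ^ b / 2 ^ b)⁻¹ := by
          apply inv_anti₀ (by positivity) key
    _ = 2 ^ b * ((1 + ‖w‖) ^ b)⁻¹ := by
          rw [div_eq_mul_inv, mul_inv, inv_inv, mul_comm]
  calc ∫⁻ w in (ball (0 : EuclideanSpace ℝ (Fin d)) 1)ᶜ, ENNReal.ofReal (‖w‖ ^ (-b))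
      ≤ ∫⁻ w in (ball (0 : EuclideanSpace ℝ (Fin d)) 1)ᶜ,
          ENNReal.ofReal ((2:ℝ) ^ b * (1 + ‖w‖) ^ (-b)) :=
        setLIntegral_mono' measurableSet_ball.compl hpt
  _ ≤ ∫⁻ w : EuclideanSpace ℝ (Fin d), ENNReal.ofReal ((2:ℝ) ^ b * (1 + ‖w‖) ^ (-b)) :=
        setLIntegral_le_lintegral _ _
  _ = ENNReal.ofReal ((2:ℝ) ^ b) *
        ∫⁻ w : EuclideanSpace ℝ (Fin d), ENNReal.ofReal ((1 + ‖w‖) ^ (-b)) := by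
        simp_rw [ENNReal.ofReal_mul (by positivity : (0:ℝ) ≤ (2:ℝ) ^ b)]
        rw [lintegral_const_mul' _ _ ENNReal.ofReal_ne_top]
  _ < ⊤ := by
        apply ENNReal.mul_lt_top ENNReal.ofReal_lt_top
        have := finite_integral_one_add_norm
          (μ := (volume : Measure (EuclideanSpace ℝ (Fin d)))) (r := b) ?_
        · exact this
        · rwa [finrank_euclideanSpace_fin]

end Aux

theorem stmt3 (d : ℕ) (hd : 0 < d) (α k : ℝ) (hα : 0 < α ∧ α < 1) (hk : 0 < k ∧ k < α) :
    ∃ C : ℝ, 0 < C ∧ ∀ x : EuclideanSpace ℝ (Fin d),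
      ∫⁻ y : EuclideanSpace ℝ (Fin d),
          ENNReal.ofReal (|(jb y ^ k)⁻¹ - (jb x ^ k)⁻¹| / ‖y - x‖ ^ ((d : ℝ) + α)) ≤
        ENNReal.ofReal (C * jb x ^ (-α)) := by
  obtain ⟨hα0, hα1⟩ := hα
  obtain ⟨hk0, hkα⟩ := hk
  have hd1 : (1:ℝ) ≤ d := by exact_mod_cast hd
  set β : ℝ := (d : ℝ) + α with hβ
  have hβ0 : 0 < β := by positivity
  obtain ⟨c1, hc1nn, hJ1eq⟩ : ∃ c : ℝ, 0 ≤ c ∧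
      (∫⁻ w in ball (0 : EuclideanSpace ℝ (Fin d)) 1, ENNReal.ofReal (‖w‖ ^ (1 - β)))
        = ENNReal.ofReal c :=
    ⟨_, ENNReal.toReal_nonneg, (ENNReal.ofReal_toReal
      (J1_lt_top hd (by rw [hβ]; push_cast; linarith) (by rw [hβ]; linarith)).ne).symm⟩
  obtain ⟨c2, hc2nn, hJ2eq⟩ : ∃ c : ℝ, 0 ≤ c ∧
      (∫⁻ w in (ball (0 : EuclideanSpace ℝ (Fin d)) 1)ᶜ, ENNReal.ofReal (‖w‖ ^ (-β)))
        = ENNReal.ofReal c :=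
    ⟨_, ENNReal.toReal_nonneg, (ENNReal.ofReal_toReal
      (J2_lt_top (by rw [hβ]; linarith)).ne).symm⟩
  refine ⟨k * 2 ^ (k + α) * c1 + 2 ^ α * c2 + 1, by positivity, fun x => ?_⟩
  set C : ℝ := k * 2 ^ (k + α) * c1 + 2 ^ α * c2 + 1 with hC
  set m : ℝ := jb x with hm
  have hm1 : 1 ≤ m := one_le_jb x
  have hm0 : 0 < m := lt_of_lt_of_le one_pos hm1
  set r : ℝ := m / 2 with hrdef
  have hr : 0 < r := by positivity
  set L : ℝ := k * r ^ (-k - 1) with hL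
  have hLnn : 0 ≤ L := by positivity
  set g : EuclideanSpace ℝ (Fin d) → ℝ≥0∞ := fun z =>
    (ball (0 : EuclideanSpace ℝ (Fin d)) r).indicator
      (fun z => ENNReal.ofReal (L * ‖z‖ ^ (1 - β))) z +
    (ball (0 : EuclideanSpace ℝ (Fin d)) r)ᶜ.indicator
      (fun z => ENNReal.ofReal (‖z‖ ^ (-β))) z with hg
  -- pointwise bound
  have hpt : ∀ y : EuclideanSpace ℝ (Fin d),
      ENNReal.ofReal (|(jb y ^ k)⁻¹ - (jb x ^ k)⁻¹| / ‖y - x‖ ^ ((d : ℝ) + α)) ≤ g (y - x) := by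
    intro y
    have hjy1 : 1 ≤ jb y := one_le_jb y
    have hjy0 : 0 < jb y := lt_of_lt_of_le one_pos hjy1
    have hinvy : (jb y ^ k)⁻¹ = jb y ^ (-k) := (Real.rpow_neg hjy0.le k).symm ▸ rfl
    have hinvx : (jb x ^ k)⁻¹ = jb x ^ (-k) := (Real.rpow_neg hm0.le k).symm ▸ rfl
    by_cases hcase : ‖y - x‖ < r
    · have hmem : y - x ∈ ball (0 : EuclideanSpace ℝ (Fin d)) r := mem_ball_zero_iff.mpr hcase
      have hreal : |(jb y ^ k)⁻¹ - (jb x ^ k)⁻¹| / ‖y - x‖ ^ ((d : ℝ) + α)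
          ≤ L * ‖y - x‖ ^ (1 - β) := by
        have hjyr : r ≤ jb y := by
          have h1 := abs_jb_sub_le x y
          rw [abs_le] at h1
          have h2 : m - ‖y - x‖ ≤ jb y := by rw [hm]; linarith [h1.1]
          have h3 : m - r = r := by rw [hrdef]; ring
          linarith [hcase.le]
        have hjxr : r ≤ jb x := by rw [← hm, hrdef]; linarith
        have hdiff : |(jb y ^ k)⁻¹ - (jb x ^ k)⁻¹| ≤ L * ‖y - x‖ := by
          rw [hinvy, hinvx]
          calc |jb y ^ (-k) - jb x ^ (-k)| ≤ k * r ^ (-k - 1) * |jb y - jb x| :=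
                diff_bound hk0 hr hjyr hjxr
          _ ≤ L * ‖y - x‖ := by
              rw [hL]
              exact mul_le_mul_of_nonneg_left (abs_jb_sub_le x y) (by positivity)
        rcases eq_or_ne y x with rfl | hne
        · have e1 : (0:ℝ) ^ ((d:ℝ) + α) = 0 :=
            Real.zero_rpow (by positivity : (0:ℝ) < (d:ℝ) + α).ne'
          have e2 : (0:ℝ) ^ ((1:ℝ) - β) = 0 :=
            Real.zero_rpow (by rw [hβ]; intro h; linarith [show (1:ℝ) - ((d:ℝ) + α) = 0 from h])
          simp only [sub_self, norm_zero, e1, e2, div_zero, zero_div, mul_zero, abs_zero, le_refl]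
        · have ht0 : 0 < ‖y - x‖ := by
            rw [norm_pos_iff]; exact sub_ne_zero_of_ne hne
          calc |(jb y ^ k)⁻¹ - (jb x ^ k)⁻¹| / ‖y - x‖ ^ ((d : ℝ) + α)
              ≤ (L * ‖y - x‖) / ‖y - x‖ ^ ((d : ℝ) + α) := by gcongr
          _ = L * ‖y - x‖ ^ (1 - β) := by
              rw [Real.rpow_sub ht0, Real.rpow_one, ← hβ, mul_div_assoc]
      calc ENNReal.ofReal (|(jb y ^ k)⁻¹ - (jb x ^ k)⁻¹| / ‖y - x‖ ^ ((d : ℝ) + α))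
          ≤ ENNReal.ofReal (L * ‖y - x‖ ^ (1 - β)) := ENNReal.ofReal_le_ofReal hreal
      _ ≤ g (y - x) := by
          rw [hg]
          simp only
          rw [Set.indicator_of_mem hmem]
          exact le_add_right le_rfl
    · push_neg at hcase
      have ht0 : 0 < ‖y - x‖ := lt_of_lt_of_le hr hcase
      have hnmem : y - x ∉ ball (0 : EuclideanSpace ℝ (Fin d)) r := by
        rw [mem_ball_zero_iff]; linarith
      have hreal : |(jb y ^ k)⁻¹ - (jb x ^ k)⁻¹| / ‖y - x‖ ^ ((d : ℝ) + α)
          ≤ ‖y - x‖ ^ (-β) := by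
        have ha1 : (jb y ^ k)⁻¹ ≤ 1 := by
          rw [hinvy]
          exact Real.rpow_le_one_of_one_le_of_nonpos hjy1 (by linarith)
        have hb1 : (jb x ^ k)⁻¹ ≤ 1 := by
          rw [hinvx]
          exact Real.rpow_le_one_of_one_le_of_nonpos hm1 (by linarith)
        have ha0' : 0 < (jb y ^ k)⁻¹ := by positivity
        have hb0' : 0 < (jb x ^ k)⁻¹ := by positivity
        have habs : |(jb y ^ k)⁻¹ - (jb x ^ k)⁻¹| ≤ 1 := by
          rw [abs_le]; constructor <;> linarith
        calc |(jb y ^ k)⁻¹ - (jb x ^ k)⁻¹| / ‖y - x‖ ^ ((d : ℝ) + α)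
            ≤ 1 / ‖y - x‖ ^ ((d : ℝ) + α) := by gcongr
        _ = ‖y - x‖ ^ (-β) := by
            rw [Real.rpow_neg ht0.le, one_div, hβ]
      calc ENNReal.ofReal (|(jb y ^ k)⁻¹ - (jb x ^ k)⁻¹| / ‖y - x‖ ^ ((d : ℝ) + α))
          ≤ ENNReal.ofReal (‖y - x‖ ^ (-β)) := ENNReal.ofReal_le_ofReal hreal
      _ ≤ g (y - x) := by
          rw [hg]
          simp only
          rw [Set.indicator_of_mem (mem_compl hnmem)]
          exact le_add_left le_rfl
  have hgmeas1 : Measurable fun z : EuclideanSpace ℝ (Fin d) =>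
      ENNReal.ofReal (L * ‖z‖ ^ (1 - β)) := by fun_prop
  have step1 : ∫⁻ y : EuclideanSpace ℝ (Fin d),
      ENNReal.ofReal (|(jb y ^ k)⁻¹ - (jb x ^ k)⁻¹| / ‖y - x‖ ^ ((d : ℝ) + α))
      ≤ ∫⁻ z : EuclideanSpace ℝ (Fin d), g z := by
    calc ∫⁻ y : EuclideanSpace ℝ (Fin d),
        ENNReal.ofReal (|(jb y ^ k)⁻¹ - (jb x ^ k)⁻¹| / ‖y - x‖ ^ ((d : ℝ) + α))
        ≤ ∫⁻ y : EuclideanSpace ℝ (Fin d), g (y - x) := lintegral_mono hpt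
    _ = ∫⁻ z : EuclideanSpace ℝ (Fin d), g z := by
        simp_rw [sub_eq_add_neg]
        exact lintegral_add_right_eq_self g (-x)
  have step2 : ∫⁻ z : EuclideanSpace ℝ (Fin d), g z =
      ENNReal.ofReal L * (ENNReal.ofReal (r ^ (1 - α)) * ENNReal.ofReal c1) +
        ENNReal.ofReal (r ^ (-α)) * ENNReal.ofReal c2 := by
    rw [hg]
    rw [lintegral_add_left (hgmeas1.indicator measurableSet_ball)]
    rw [lintegral_indicator (f := fun z => ENNReal.ofReal (L * ‖z‖ ^ (1 - β))) measurableSet_ball,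
      lintegral_indicator (f := fun z => ENNReal.ofReal (‖z‖ ^ (-β))) measurableSet_ball.compl]
    have hb1 : ∫⁻ z in ball (0 : EuclideanSpace ℝ (Fin d)) r,
        ENNReal.ofReal (L * ‖z‖ ^ (1 - β)) =
        ENNReal.ofReal L * ∫⁻ z in ball (0 : EuclideanSpace ℝ (Fin d)) r,
          ENNReal.ofReal (‖z‖ ^ (1 - β)) := by
      simp_rw [ENNReal.ofReal_mul hLnn]
      rw [lintegral_const_mul' _ _ ENNReal.ofReal_ne_top]
    have hball : ∀ w : EuclideanSpace ℝ (Fin d),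
        r • w ∈ ball (0 : EuclideanSpace ℝ (Fin d)) r ↔
          w ∈ ball (0 : EuclideanSpace ℝ (Fin d)) 1 := by
      intro w
      rw [mem_ball_zero_iff, mem_ball_zero_iff, norm_smul, Real.norm_eq_abs, abs_of_pos hr]
      constructor
      · intro h; nlinarith
      · intro h; nlinarith
    have hcompl : ∀ w : EuclideanSpace ℝ (Fin d),
        r • w ∈ (ball (0 : EuclideanSpace ℝ (Fin d)) r)ᶜ ↔
          w ∈ (ball (0 : EuclideanSpace ℝ (Fin d)) 1)ᶜ := by
      intro w
      rw [mem_compl_iff, mem_compl_iff, not_iff_not]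
      exact hball w
    rw [hb1, set_int hr measurableSet_ball measurableSet_ball hball,
      set_int hr measurableSet_ball.compl measurableSet_ball.compl hcompl]
    rw [show (d : ℝ) + (1 - β) = 1 - α by rw [hβ]; ring,
      show (d : ℝ) + (-β) = -α by rw [hβ]; ring, hJ1eq, hJ2eq]
  have hfinal : ENNReal.ofReal L * (ENNReal.ofReal (r ^ (1 - α)) * ENNReal.ofReal c1) +
      ENNReal.ofReal (r ^ (-α)) * ENNReal.ofReal c2 ≤ ENNReal.ofReal (C * m ^ (-α)) := by
    have hrm : r ^ (-(k + α)) = 2 ^ (k + α) * m ^ (-(k + α)) := by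
      rw [hrdef, Real.div_rpow hm0.le (by norm_num : (0:ℝ) ≤ 2),
        Real.rpow_neg hm0.le, Real.rpow_neg (by norm_num : (0:ℝ) ≤ 2)]
      have h2 : (0:ℝ) < (2:ℝ) ^ (k + α) := Real.rpow_pos_of_pos two_pos _
      field_simp
    have hr2 : r ^ (-α) = 2 ^ α * m ^ (-α) := by
      rw [hrdef, Real.div_rpow hm0.le (by norm_num : (0:ℝ) ≤ 2),
        Real.rpow_neg hm0.le, Real.rpow_neg (by norm_num : (0:ℝ) ≤ 2)]
      have h2 : (0:ℝ) < (2:ℝ) ^ α := Real.rpow_pos_of_pos two_pos _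
      field_simp
    have hLr : L * r ^ (1 - α) = k * r ^ (-(k + α)) := by
      rw [hL, mul_assoc, ← Real.rpow_add hr, show (-k - 1) + (1 - α) = -(k + α) by ring]
    have hreal2 : L * (r ^ (1 - α) * c1) + r ^ (-α) * c2 ≤ C * m ^ (-α) := by
      have e1 : L * (r ^ (1 - α) * c1) = (k * 2 ^ (k + α) * c1) * m ^ (-(k + α)) := by
        rw [← mul_assoc, hLr, hrm]; ring
      have e2 : r ^ (-α) * c2 = (2 ^ α * c2) * m ^ (-α) := by
        rw [hr2]; ring
      have e3 : m ^ (-(k + α)) ≤ m ^ (-α) :=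
        Real.rpow_le_rpow_of_exponent_le hm1 (by linarith)
      have e4 : (0:ℝ) ≤ m ^ (-α) := Real.rpow_nonneg hm0.le _
      rw [e1, e2, hC]
      calc (k * 2 ^ (k + α) * c1) * m ^ (-(k + α)) + (2 ^ α * c2) * m ^ (-α)
          ≤ (k * 2 ^ (k + α) * c1) * m ^ (-α) + (2 ^ α * c2) * m ^ (-α) := by
            have h5 : (0:ℝ) ≤ k * 2 ^ (k + α) * c1 := by positivity
            exact add_le_add_left (mul_le_mul_of_nonneg_left e3 h5) _
      _ ≤ (k * 2 ^ (k + α) * c1 + 2 ^ α * c2 + 1) * m ^ (-α) := by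
            have h6 : (k * 2 ^ (k + α) * c1 + 2 ^ α * c2 + 1) * m ^ (-α)
                = (k * 2 ^ (k + α) * c1) * m ^ (-α) + (2 ^ α * c2) * m ^ (-α) + m ^ (-α) := by
              ring
            rw [h6]
            linarith
    calc ENNReal.ofReal L * (ENNReal.ofReal (r ^ (1 - α)) * ENNReal.ofReal c1) +
          ENNReal.ofReal (r ^ (-α)) * ENNReal.ofReal c2
        = ENNReal.ofReal (L * (r ^ (1 - α) * c1) + r ^ (-α) * c2) := by
          rw [← ENNReal.ofReal_mul (by positivity : (0:ℝ) ≤ r ^ (1 - α)),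
            ← ENNReal.ofReal_mul hLnn,
            ← ENNReal.ofReal_mul (by positivity : (0:ℝ) ≤ r ^ (-α)),
            ← ENNReal.ofReal_add (by positivity) (by positivity)]
    _ ≤ ENNReal.ofReal (C * m ^ (-α)) := ENNReal.ofReal_le_ofReal hreal2
  calc ∫⁻ y : EuclideanSpace ℝ (Fin d),
      ENNReal.ofReal (|(jb y ^ k)⁻¹ - (jb x ^ k)⁻¹| / ‖y - x‖ ^ ((d : ℝ) + α))
      ≤ ∫⁻ z : EuclideanSpace ℝ (Fin d), g z := step1
  _ = _ := step2
  _ ≤ ENNReal.ofReal (C * m ^ (-α)) := hfinal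
end

section
/- Let d ∈ ℕ*, α ∈ (0,2), p ∈ (1,∞), Ω ⊂ ℝ^d a bounded measurable set, and μ : ℝ^d → [0,∞) with μ ∈ L^∞(Ω) and μ(Ω) := ∫_Ω μ > 0. Then for every measurable u : ℝ^d → ℝ with ∫_Ω |u|^p μ < ∞: 0 ≤ ∫_Ω u(x)^{p−1} ( u(x) − ⟨u⟩_{μ,Ω} ) μ(x) dx ≤ diam(Ω)^{d+α} ( ‖μ‖_{L^∞(Ω)} / μ(Ω) ) ∫_Ω D_p(u)(x) μ(x) dx, where ⟨u⟩_{μ,Ω} := (1/μ(Ω)) ∫_Ω u μ, u^{p−1} is the signed power, diam(Ω) := sup_{(x,y)∈Ω²} |x−y|, and D_p(u)(x) := (1/2)∫_{ℝ^d} (u(y)−u(x))(u(y)^{p−1}−u(x)^{p−1}) / |y−x|^{d+α} dy. -/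
open MeasureTheory

noncomputable def sgnPow (a z : ℝ) : ℝ := |z| ^ (a - 1) * z

lemma sgnPow_nonneg {a z : ℝ} (hz : 0 ≤ z) : 0 ≤ sgnPow a z :=
  mul_nonneg (Real.rpow_nonneg (abs_nonneg z) _) hz

lemma sgnPow_nonpos {a z : ℝ} (hz : z ≤ 0) : sgnPow a z ≤ 0 :=
  mul_nonpos_of_nonneg_of_nonpos (Real.rpow_nonneg (abs_nonneg z) _) hz

lemma sgnPow_of_pos {a z : ℝ} (hz : 0 < z) : sgnPow a z = z ^ a := by
  rw [sgnPow, abs_of_pos hz, ← Real.rpow_add_one hz.ne' , sub_add_cancel]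

lemma sgnPow_neg (a z : ℝ) : sgnPow a (-z) = - sgnPow a z := by
  simp [sgnPow, abs_neg, mul_neg]

lemma sgnPow_monotone {a : ℝ} (ha : 0 < a) : Monotone (sgnPow a) := by
  have key : ∀ x y : ℝ, 0 ≤ x → x ≤ y → sgnPow a x ≤ sgnPow a y := by
    intro x y hx hxy
    rcases eq_or_lt_of_le hx with h | h
    · exact le_trans (by simp [sgnPow, ← h]) (sgnPow_nonneg (le_trans hx hxy))
    · rw [sgnPow_of_pos h, sgnPow_of_pos (lt_of_lt_of_le h hxy)]
      exact Real.rpow_le_rpow h.le hxy ha.le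
  intro x y hxy
  rcases le_or_gt 0 x with hx | hx
  · exact key x y hx hxy
  rcases le_or_gt 0 y with hy | hy
  · exact le_trans (sgnPow_nonpos hx.le) (sgnPow_nonneg hy)
  · have := key (-y) (-x) (by linarith) (by linarith)
    rw [sgnPow_neg, sgnPow_neg] at this
    linarith

lemma sgnPow_mul_self {a : ℝ} (ha : 0 < a) (z : ℝ) : z * sgnPow a z = |z| ^ (a + 1) := by
  rcases eq_or_ne z 0 with h | h
  · simp [h, sgnPow, Real.zero_rpow (by linarith : a + 1 ≠ 0)]
  · have habs : (0:ℝ) < |z| := abs_pos.mpr h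
    rw [sgnPow, show z * (|z| ^ (a - 1) * z) = |z| ^ (a-1) * z^2 by ring, ← sq_abs,
      ← Real.rpow_natCast |z| 2, ← Real.rpow_add habs]
    norm_num
    rw [show a - 1 + 2 = a + 1 by ring]

lemma abs_sgnPow {a : ℝ} (ha : 0 < a) (z : ℝ) : |sgnPow a z| = |z| ^ a := by
  rcases eq_or_ne z 0 with h | h
  · simp [h, sgnPow, Real.zero_rpow ha.ne']
  · have habs : (0:ℝ) < |z| := abs_pos.mpr h
    rw [sgnPow, abs_mul, abs_of_nonneg (Real.rpow_nonneg (abs_nonneg z) _),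
      ← Real.rpow_add_one habs.ne', sub_add_cancel]

lemma measurable_sgnPow (a : ℝ) : Measurable (sgnPow a) :=
  (measurable_id.abs.pow measurable_const).mul measurable_id

lemma rpow_le_one_add_rpow {t q r : ℝ} (ht : 0 ≤ t) (hq : 0 ≤ q) (hqr : q ≤ r) :
    t ^ q ≤ 1 + t ^ r := by
  rcases le_or_gt t 1 with h1 | h1
  · exact le_trans (Real.rpow_le_one ht h1 hq) (le_add_of_nonneg_right (Real.rpow_nonneg ht _))
  · exact le_trans (Real.rpow_le_rpow_of_exponent_le h1.le hqr)
      (le_add_of_nonneg_left zero_le_one)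


theorem stmt15 (d : ℕ) (hd : 0 < d) (α p : ℝ) (hα : 0 < α ∧ α < 2) (hp : 1 < p)
    (Ω : Set (EuclideanSpace ℝ (Fin d))) (hΩmeas : MeasurableSet Ω)
    (hΩbdd : Bornology.IsBounded Ω)
    (μ : EuclideanSpace ℝ (Fin d) → ℝ) (hμ0 : ∀ x, 0 ≤ μ x) (hμmeas : Measurable μ)
    (hμbdd : MemLp μ ⊤ (volume.restrict Ω)) (hμΩ : 0 < ∫ x in Ω, μ x)
    (u : EuclideanSpace ℝ (Fin d) → ℝ) (hu : Measurable u)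
    (hup : Integrable (fun x => |u x| ^ p * μ x) (volume.restrict Ω)) :
    0 ≤ ∫ x in Ω,
        sgnPow (p - 1) (u x) * (u x - (∫ y in Ω, u y * μ y) / ∫ y in Ω, μ y) * μ x ∧
    ENNReal.ofReal (∫ x in Ω,
        sgnPow (p - 1) (u x) * (u x - (∫ y in Ω, u y * μ y) / ∫ y in Ω, μ y) * μ x) ≤
      ENNReal.ofReal (Metric.diam Ω ^ ((d : ℝ) + α) *
          ((eLpNorm μ ⊤ (volume.restrict Ω)).toReal / ∫ y in Ω, μ y)) *
        ∫⁻ x in Ω,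
          (1 / 2) * (∫⁻ y : EuclideanSpace ℝ (Fin d),
            ENNReal.ofReal ((u y - u x) * (sgnPow (p - 1) (u y) - sgnPow (p - 1) (u x)) /
              ‖y - x‖ ^ ((d : ℝ) + α))) * ENNReal.ofReal (μ x) := by
  obtain ⟨hα0, hα2⟩ := hα
  have hp1 : (0:ℝ) < p - 1 := by linarith
  have ha0 : (0:ℝ) ≤ (d : ℝ) + α := by positivity
  haveI : IsFiniteMeasure (volume.restrict Ω) := ⟨by
    rw [Measure.restrict_apply_univ]; exact hΩbdd.measure_lt_top⟩
  set f := sgnPow (p - 1) with hfdef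
  have hfm : Measurable f := measurable_sgnPow _
  set M := ∫ x in Ω, μ x with hM
  set A := ∫ x in Ω, u x * μ x with hA
  set B := ∫ x in Ω, f (u x) * μ x with hB
  set P := ∫ x in Ω, |u x| ^ p * μ x with hP
  have hM0 : M ≠ 0 := ne_of_gt hμΩ
  -- integrability
  have hμint : Integrable μ (volume.restrict Ω) := hμbdd.integrable le_top
  have hbound : Integrable (fun x => (1 + |u x| ^ p) * μ x) (volume.restrict Ω) := by
    refine (hμint.add hup).congr (Filter.Eventually.of_forall fun x => ?_)
    simp only [Pi.add_apply]
    ring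
  have huμ : Integrable (fun x => u x * μ x) (volume.restrict Ω) := by
    refine hbound.mono' (hu.mul hμmeas).aestronglyMeasurable
      (Filter.Eventually.of_forall fun x => ?_)
    rw [Real.norm_eq_abs, abs_mul, abs_of_nonneg (hμ0 x)]
    have h1 : |u x| ≤ 1 + |u x| ^ p := by
      simpa [Real.rpow_one] using
        rpow_le_one_add_rpow (abs_nonneg (u x)) zero_le_one hp.le
    exact mul_le_mul_of_nonneg_right h1 (hμ0 x)
  have hfuμ : Integrable (fun x => f (u x) * μ x) (volume.restrict Ω) := by
    refine hbound.mono' (((hfm.comp hu)).mul hμmeas).aestronglyMeasurable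
      (Filter.Eventually.of_forall fun x => ?_)
    rw [Real.norm_eq_abs, abs_mul, abs_of_nonneg (hμ0 x), hfdef, abs_sgnPow hp1]
    exact mul_le_mul_of_nonneg_right
      (rpow_le_one_add_rpow (abs_nonneg _) (by linarith) (by linarith)) (hμ0 x)
  -- nonnegativity of g
  have hg0 : ∀ x y : EuclideanSpace ℝ (Fin d),
      0 ≤ (u y - u x) * (f (u y) - f (u x)) := by
    intro x y
    rcases le_total (u x) (u y) with h | h
    · have := sgnPow_monotone hp1 h
      exact mul_nonneg (by linarith) (by rw [hfdef]; linarith)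
    · have := sgnPow_monotone hp1 h
      have h2 : f (u y) - f (u x) ≤ 0 := by rw [hfdef]; linarith
      nlinarith
  have hself : ∀ z : ℝ, z * f z = |z| ^ p := by
    intro z
    rw [hfdef, sgnPow_mul_self hp1, show p - 1 + 1 = p by ring]
  -- inner expansion
  have hfun2 : ∀ x : EuclideanSpace ℝ (Fin d),
      (fun y => (u y - u x) * (f (u y) - f (u x)) * μ y)
        = fun y => (|u y| ^ p * μ y - f (u x) * (u y * μ y) - u x * (f (u y) * μ y))
            + (u x * f (u x)) * μ y := by
    intro x; funext y
    rw [← hself (u y)]; ring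
  have hInner_int : ∀ x : EuclideanSpace ℝ (Fin d),
      Integrable (fun y => (u y - u x) * (f (u y) - f (u x)) * μ y) (volume.restrict Ω) := by
    intro x
    rw [hfun2 x]
    exact ((hup.sub (huμ.const_mul _)).sub (hfuμ.const_mul _)).add (hμint.const_mul _)
  have hinner : ∀ x : EuclideanSpace ℝ (Fin d),
      ∫ y in Ω, (u y - u x) * (f (u y) - f (u x)) * μ y
        = P - f (u x) * A - u x * B + u x * f (u x) * M := by
    intro x
    have j1 : Integrable (fun y => |u y| ^ p * μ y - f (u x) * (u y * μ y))
        (volume.restrict Ω) := hup.sub (huμ.const_mul _)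
    have j2 : Integrable
        (fun y => |u y| ^ p * μ y - f (u x) * (u y * μ y) - u x * (f (u y) * μ y))
        (volume.restrict Ω) := j1.sub (hfuμ.const_mul _)
    have j3 : Integrable (fun y => (u x * f (u x)) * μ y) (volume.restrict Ω) :=
      hμint.const_mul _
    rw [hfun2 x, integral_add j2 j3, integral_sub j1 (hfuμ.const_mul _),
      integral_sub hup (huμ.const_mul _), integral_const_mul, integral_const_mul,
      integral_const_mul, ← hM, ← hA, ← hB, ← hP]
  have hSfun : (fun x => (∫ y in Ω, (u y - u x) * (f (u y) - f (u x)) * μ y) * μ x)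
      = fun x => (P * μ x - A * (f (u x) * μ x) - B * (u x * μ x)) + M * (|u x| ^ p * μ x) := by
    funext x
    rw [hinner x, ← hself (u x)]
    ring
  have k1 : Integrable (fun x => P * μ x - A * (f (u x) * μ x)) (volume.restrict Ω) :=
    (hμint.const_mul _).sub (hfuμ.const_mul _)
  have k2 : Integrable (fun x => P * μ x - A * (f (u x) * μ x) - B * (u x * μ x))
      (volume.restrict Ω) := k1.sub (huμ.const_mul _)
  have hSint : Integrable
      (fun x => (∫ y in Ω, (u y - u x) * (f (u y) - f (u x)) * μ y) * μ x)
      (volume.restrict Ω) := by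
    rw [hSfun]
    exact k2.add (hup.const_mul _)
  have hSval : ∫ x in Ω, (∫ y in Ω, (u y - u x) * (f (u y) - f (u x)) * μ y) * μ x
      = 2 * (P * M - A * B) := by
    rw [hSfun, integral_add k2 (hup.const_mul M), integral_sub k1 (huμ.const_mul B),
      integral_sub (hμint.const_mul P) (hfuμ.const_mul A),
      integral_const_mul, integral_const_mul, integral_const_mul, integral_const_mul,
      ← hM, ← hA, ← hB, ← hP]
    ring
  have hS0 : 0 ≤ ∫ x in Ω, (∫ y in Ω, (u y - u x) * (f (u y) - f (u x)) * μ y) * μ x :=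
    integral_nonneg fun x => mul_nonneg
      (integral_nonneg fun y => mul_nonneg (hg0 x y) (hμ0 y)) (hμ0 x)
  have hIval : ∫ x in Ω, f (u x) * (u x - A / M) * μ x = P - A / M * B := by
    have hIfun : (fun x => f (u x) * (u x - A / M) * μ x)
        = fun x => |u x| ^ p * μ x - (A / M) * (f (u x) * μ x) := by
      funext x; rw [← hself (u x)]; ring
    rw [hIfun, integral_sub hup (hfuμ.const_mul (A / M)), integral_const_mul, ← hB, ← hP]
  have hI2 : ∫ x in Ω, f (u x) * (u x - A / M) * μ x
      = (∫ x in Ω, (∫ y in Ω, (u y - u x) * (f (u y) - f (u x)) * μ y) * μ x) / (2 * M) := by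
    rw [hIval, hSval]
    field_simp
  have part1 : 0 ≤ ∫ x in Ω, f (u x) * (u x - A / M) * μ x := by
    rw [hI2]
    exact div_nonneg hS0 (by linarith)
  refine ⟨part1, ?_⟩
  -- Part 2
  set F := fun x : EuclideanSpace ℝ (Fin d) => ∫⁻ y : EuclideanSpace ℝ (Fin d),
    ENNReal.ofReal ((u y - u x) * (f (u y) - f (u x)) / ‖y - x‖ ^ ((d : ℝ) + α)) with hFdef
  set Ne := eLpNorm μ ⊤ (volume.restrict Ω) with hNedef
  have hNetop : Ne ≠ ⊤ := hμbdd.2.ne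
  have hμle : ∀ᵐ y ∂(volume.restrict Ω), ENNReal.ofReal (μ y) ≤ Ne := by
    rw [hNedef, eLpNorm_exponent_top]
    filter_upwards [ae_le_eLpNormEssSup (f := μ) (μ := volume.restrict Ω)] with y hy
    rwa [← Real.enorm_eq_ofReal (hμ0 y)]
  set X := ENNReal.ofReal (Metric.diam Ω ^ ((d : ℝ) + α)) with hXdef
  have hXtop : X ≠ ⊤ := ENNReal.ofReal_ne_top
  -- key1 : ofReal S = iterated lintegral
  have key1 : ENNReal.ofReal
      (∫ x in Ω, (∫ y in Ω, (u y - u x) * (f (u y) - f (u x)) * μ y) * μ x)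
      = ∫⁻ x in Ω, (∫⁻ y in Ω, ENNReal.ofReal ((u y - u x) * (f (u y) - f (u x)))
          * ENNReal.ofReal (μ y)) * ENNReal.ofReal (μ x) := by
    rw [ofReal_integral_eq_lintegral_ofReal hSint (Filter.Eventually.of_forall fun x =>
      mul_nonneg (integral_nonneg fun y => mul_nonneg (hg0 x y) (hμ0 y)) (hμ0 x))]
    refine lintegral_congr fun x => ?_
    rw [ENNReal.ofReal_mul (integral_nonneg fun y => mul_nonneg (hg0 x y) (hμ0 y))]
    congr 1
    rw [ofReal_integral_eq_lintegral_ofReal (hInner_int x)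
      (Filter.Eventually.of_forall fun y => mul_nonneg (hg0 x y) (hμ0 y))]
    exact lintegral_congr fun y => ENNReal.ofReal_mul (hg0 x y)
  -- pointwise domain bound
  have hreal : ∀ x ∈ Ω, ∀ y ∈ Ω,
      (u y - u x) * (f (u y) - f (u x)) ≤ Metric.diam Ω ^ ((d : ℝ) + α)
        * ((u y - u x) * (f (u y) - f (u x)) / ‖y - x‖ ^ ((d : ℝ) + α)) := by
    intro x hx y hy
    rcases eq_or_ne y x with rfl | hne
    · simp
    · have hr : (0:ℝ) < ‖y - x‖ := by rwa [norm_sub_pos_iff]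
      have hle : ‖y - x‖ ≤ Metric.diam Ω := by
        rw [← dist_eq_norm]; exact Metric.dist_le_diam_of_mem hΩbdd hy hx
      have hra : (0:ℝ) < ‖y - x‖ ^ ((d : ℝ) + α) := Real.rpow_pos_of_pos hr _
      have h2 : ‖y - x‖ ^ ((d : ℝ) + α) ≤ Metric.diam Ω ^ ((d : ℝ) + α) :=
        Real.rpow_le_rpow hr.le hle ha0
      calc (u y - u x) * (f (u y) - f (u x))
          = (u y - u x) * (f (u y) - f (u x)) / ‖y - x‖ ^ ((d : ℝ) + α)
            * ‖y - x‖ ^ ((d : ℝ) + α) := (div_mul_cancel₀ _ hra.ne').symm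
        _ ≤ (u y - u x) * (f (u y) - f (u x)) / ‖y - x‖ ^ ((d : ℝ) + α)
            * Metric.diam Ω ^ ((d : ℝ) + α) :=
            mul_le_mul_of_nonneg_left h2 (div_nonneg (hg0 x y) hra.le)
        _ = _ := mul_comm _ _
  have hbd : ∀ x ∈ Ω,
      (∫⁻ y in Ω, ENNReal.ofReal ((u y - u x) * (f (u y) - f (u x)))
        * ENNReal.ofReal (μ y)) ≤ X * Ne * F x := by
    intro x hx
    have step1 : (∫⁻ y in Ω, ENNReal.ofReal ((u y - u x) * (f (u y) - f (u x)))
        * ENNReal.ofReal (μ y))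
        ≤ ∫⁻ y in Ω, (X * Ne) * ENNReal.ofReal
            ((u y - u x) * (f (u y) - f (u x)) / ‖y - x‖ ^ ((d : ℝ) + α)) := by
      refine lintegral_mono_ae ?_
      filter_upwards [hμle, ae_restrict_mem hΩmeas] with y h1 h2
      calc ENNReal.ofReal ((u y - u x) * (f (u y) - f (u x))) * ENNReal.ofReal (μ y)
          ≤ (X * ENNReal.ofReal ((u y - u x) * (f (u y) - f (u x))
              / ‖y - x‖ ^ ((d : ℝ) + α))) * Ne := by
            refine mul_le_mul' ?_ h1
            rw [hXdef, ← ENNReal.ofReal_mul (Real.rpow_nonneg Metric.diam_nonneg _)]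
            exact ENNReal.ofReal_le_ofReal (hreal x hx y h2)
        _ = (X * Ne) * ENNReal.ofReal ((u y - u x) * (f (u y) - f (u x))
              / ‖y - x‖ ^ ((d : ℝ) + α)) := by ring
    refine le_trans step1 ?_
    rw [lintegral_const_mul' _ _ (ENNReal.mul_ne_top hXtop hNetop)]
    exact mul_le_mul_right (setLIntegral_le_lintegral _ _) _
  have key2 : (∫⁻ x in Ω, (∫⁻ y in Ω, ENNReal.ofReal ((u y - u x) * (f (u y) - f (u x)))
        * ENNReal.ofReal (μ y)) * ENNReal.ofReal (μ x))
      ≤ X * Ne * ∫⁻ x in Ω, F x * ENNReal.ofReal (μ x) := by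
    calc (∫⁻ x in Ω, (∫⁻ y in Ω, ENNReal.ofReal ((u y - u x) * (f (u y) - f (u x)))
          * ENNReal.ofReal (μ y)) * ENNReal.ofReal (μ x))
        ≤ ∫⁻ x in Ω, (X * Ne) * (F x * ENNReal.ofReal (μ x)) := by
          refine lintegral_mono_ae ?_
          filter_upwards [ae_restrict_mem hΩmeas] with x hx
          calc (∫⁻ y in Ω, ENNReal.ofReal ((u y - u x) * (f (u y) - f (u x)))
                * ENNReal.ofReal (μ y)) * ENNReal.ofReal (μ x)
              ≤ (X * Ne * F x) * ENNReal.ofReal (μ x) := mul_le_mul_left (hbd x hx) _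
            _ = (X * Ne) * (F x * ENNReal.ofReal (μ x)) := by ring
      _ = X * Ne * ∫⁻ x in Ω, F x * ENNReal.ofReal (μ x) :=
          lintegral_const_mul' _ _ (ENNReal.mul_ne_top hXtop hNetop)
  set T := ∫⁻ x in Ω, 1 / 2 * F x * ENNReal.ofReal (μ x) with hTdef
  have hT : ∫⁻ x in Ω, F x * ENNReal.ofReal (μ x) = 2 * T := by
    rw [hTdef, ← lintegral_const_mul' 2 _ (by norm_num)]
    refine lintegral_congr fun x => ?_
    rw [one_div, ← mul_assoc, ← mul_assoc,
      ENNReal.mul_inv_cancel (by norm_num) (by norm_num), one_mul]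
  -- convert goal
  show ENNReal.ofReal (∫ x in Ω, f (u x) * (u x - A / M) * μ x)
      ≤ ENNReal.ofReal (Metric.diam Ω ^ ((d : ℝ) + α) * (Ne.toReal / M)) * T
  have hc0 : ENNReal.ofReal (2 * M) ≠ 0 := by
    simp only [ne_eq, ENNReal.ofReal_eq_zero, not_le]
    linarith
  rw [← ENNReal.mul_le_mul_iff_left hc0 ENNReal.ofReal_ne_top]
  have hLHS : ENNReal.ofReal (∫ x in Ω, f (u x) * (u x - A / M) * μ x)
      * ENNReal.ofReal (2 * M)
      = ENNReal.ofReal (∫ x in Ω, (∫ y in Ω, (u y - u x) * (f (u y) - f (u x)) * μ y)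
          * μ x) := by
    rw [← ENNReal.ofReal_mul part1, hI2,
      div_mul_cancel₀ _ (ne_of_gt (by linarith : (0:ℝ) < 2 * M))]
  have hRHS : (ENNReal.ofReal (Metric.diam Ω ^ ((d : ℝ) + α) * (Ne.toReal / M)) * T)
      * ENNReal.ofReal (2 * M)
      = X * Ne * (2 * T) := by
    rw [mul_right_comm,
      ← ENNReal.ofReal_mul (by positivity),
      show Metric.diam Ω ^ ((d : ℝ) + α) * (Ne.toReal / M) * (2 * M)
        = 2 * (Metric.diam Ω ^ ((d : ℝ) + α) * Ne.toReal) by field_simp,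
      ENNReal.ofReal_mul (by norm_num : (0:ℝ) ≤ 2),
      ENNReal.ofReal_mul (Real.rpow_nonneg Metric.diam_nonneg _),
      ENNReal.ofReal_toReal hNetop, ENNReal.ofReal_ofNat, ← hXdef]
    ring
  rw [hLHS, hRHS, key1]
  calc (∫⁻ x in Ω, (∫⁻ y in Ω, ENNReal.ofReal ((u y - u x) * (f (u y) - f (u x)))
        * ENNReal.ofReal (μ y)) * ENNReal.ofReal (μ x))
      ≤ X * Ne * ∫⁻ x in Ω, F x * ENNReal.ofReal (μ x) := key2
    _ = X * Ne * (2 * T) := by rw [hT]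
end
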